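/- Let H be an infinite-dimensional separable complex Hilbert space and let T be a compact normal operator on H. Then P(T) is a finite-dimensional subspace of H. -/

import Mathlib

open scoped ComplexConjugate
open ContinuousLinearMap Metric

local notation "⟪" x ", " y "⟫" => @inner ℂ _ _ x y

/-- A positive log-convex sequence which is periodic is constant (first step). -/
lemma logconvex_periodic_const (b : ℕ → ℝ) (hb : ∀ k, 0 < b k)
    (hconv : ∀ k, b (k + 1) ^ 2 ≤ b k * b (k + 2)) (m : ℕ) (hm : 0 < m)
    (hper : ∀ k, b (k + m) = b k) : b 1 = b 0 := by
  set c : ℕ → ℝ := fun k => b (k + 1) / b k with hc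
  have hcpos : ∀ k, 0 < c k := fun k => div_pos (hb _) (hb _)
  have hmono : Monotone c := by
    apply monotone_nat_of_le_succ
    intro k
    rw [hc]
    dsimp only
    rw [div_le_div_iff₀ (hb k) (hb (k + 1))]
    have := hconv k
    nlinarith [hb k, hb (k+1), hb (k+2)]
  have hcper : c m = c 0 := by
    rw [hc]; dsimp only
    rw [show m + 1 = 1 + m by ring, hper 1]
    have h0 : b m = b 0 := by simpa using hper 0
    rw [h0]
  have hceq : ∀ k, k ≤ m → c k = c 0 :=
    fun k hk => le_antisymm (hcper ▸ hmono hk) (hmono (Nat.zero_le k))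
  -- b k = b 0 * (c 0)^k for k ≤ m
  have hbk : ∀ k, k ≤ m → b k = b 0 * c 0 ^ k := by
    intro k hk
    induction k with
    | zero => simp
    | succ n ih =>
      have hn : n ≤ m := Nat.le_of_succ_le hk
      have hcn : c n = c 0 := hceq n hn
      have : b (n + 1) = b n * c n := by
        show b (n + 1) = b n * (b (n + 1) / b n)
        rw [mul_comm]
        exact (div_mul_cancel₀ _ (hb n).ne').symm
      rw [this, ih hn, hcn, pow_succ]; ring
  have hm1 : b m = b 0 * c 0 ^ m := hbk m le_rfl
  have hbm : b m = b 0 := by have := hper 0; simpa using this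
  have hpow : c 0 ^ m = 1 := by
    have hb0 := hb 0
    rw [hbm] at hm1
    field_simp at hm1
    nlinarith [hm1]
  have hc0 : c 0 = 1 := by
    rcases lt_trichotomy (c 0) 1 with h | h | h
    · exfalso
      have : c 0 ^ m < 1 ^ m := pow_lt_pow_left₀ h (le_of_lt (hcpos 0)) hm.ne'
      rw [hpow, one_pow] at this; linarith
    · exact h
    · exfalso
      have : (1:ℝ) < c 0 ^ m := one_lt_pow₀ h hm.ne'
      linarith [hpow]
  have := hbk 1 hm
  simpa [hc0] using this

lemma pow_fixed {H : Type*} [NormedAddCommGroup H] [InnerProductSpace ℂ H]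
    (S : H →L[ℂ] H) (x : H) (hx : S x = x) : ∀ n : ℕ, (S ^ n) x = x := by
  intro n
  induction n with
  | zero => simp
  | succ k ih => rw [pow_succ, ContinuousLinearMap.mul_apply, hx, ih]

/-- The set of periodic points of a compact normal operator on an infinite-dimensional
separable complex Hilbert space spans a finite-dimensional subspace. -/
theorem compact_normal_periodic_points_finiteDimensional
    {H : Type*} [NormedAddCommGroup H] [InnerProductSpace ℂ H] [CompleteSpace H]
    (e : HilbertBasis ℕ ℂ H) (T : H →L[ℂ] H)
    (hN : IsStarNormal T) (hC : IsCompactOperator T) :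
    FiniteDimensional ℂ
      (Submodule.span ℂ {x : H | ∃ m : ℕ, 0 < m ∧ (T ^ m) x = x}) := by
  -- normality: the adjoint has the same pointwise norms
  have hcomm : ∀ z : H, T ((ContinuousLinearMap.adjoint T) z)
      = (ContinuousLinearMap.adjoint T) (T z) := by
    intro z
    have h := hN.star_comm_self
    rw [ContinuousLinearMap.star_eq_adjoint] at h
    have := congrArg (fun (S : H →L[ℂ] H) => S z) h.symm
    simpa [ContinuousLinearMap.mul_apply] using this
  have hadj : ∀ z : H, ‖(ContinuousLinearMap.adjoint T) z‖ = ‖T z‖ := by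
    intro z
    have h1 : (⟪(ContinuousLinearMap.adjoint T) z, (ContinuousLinearMap.adjoint T) z⟫ : ℂ)
        = ⟪T z, T z⟫ := by
      rw [ContinuousLinearMap.adjoint_inner_left, hcomm,
        ContinuousLinearMap.adjoint_inner_right]
    have h2 := congrArg (fun w : ℂ => ‖w‖) h1
    rw [inner_self_eq_norm_sq_to_K, inner_self_eq_norm_sq_to_K] at h1
    have := Complex.ofReal_injective (by exact_mod_cast h1)
    have h3 : |‖(ContinuousLinearMap.adjoint T) z‖| = |‖T z‖| := by
      have := sq_abs ‖(ContinuousLinearMap.adjoint T) z‖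
      have := sq_abs ‖T z‖
      nlinarith [abs_nonneg ‖(ContinuousLinearMap.adjoint T) z‖, abs_nonneg ‖T z‖]
    rwa [abs_of_nonneg (norm_nonneg _), abs_of_nonneg (norm_nonneg _)] at h3
  -- isometry on periodic points
  have hiso : ∀ x : H, (∃ m : ℕ, 0 < m ∧ (T ^ m) x = x) → ‖T x‖ = ‖x‖ := by
    rintro x ⟨m, hm, hx⟩
    rcases eq_or_ne x 0 with rfl | hx0
    · simp
    set b : ℕ → ℝ := fun k => ‖(T ^ k) x‖ with hbdef
    have hfix : ∀ n : ℕ, ((T ^ m) ^ n) x = x := pow_fixed (T ^ m) x hx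
    have hbne : ∀ k, (T ^ k) x ≠ 0 := by
      intro k hk
      apply hx0
      have h1 : (T ^ (m * k)) x = x := by rw [pow_mul]; exact hfix k
      have h2 : m * k = k * (m - 1) + k := by
        cases m with
        | zero => omega
        | succ n => rw [Nat.succ_sub_one]; ring
      rw [h2, pow_add, ContinuousLinearMap.mul_apply, hk, map_zero] at h1
      exact h1.symm
    have hbpos : ∀ k, 0 < b k := fun k => norm_pos_iff.mpr (hbne k)
    have happ : ∀ k, (T ^ (k + 1)) x = T ((T ^ k) x) := by
      intro k
      rw [pow_succ']
      rfl
    have hconv : ∀ k, b (k + 1) ^ 2 ≤ b k * b (k + 2) := by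
      intro k
      have e1 : (⟪(T ^ (k + 1)) x, (T ^ (k + 1)) x⟫ : ℂ)
          = ⟪(T ^ k) x, (ContinuousLinearMap.adjoint T) ((T ^ (k + 1)) x)⟫ := by
        rw [ContinuousLinearMap.adjoint_inner_right, ← happ k]
      have e2 : ‖(⟪(T ^ (k + 1)) x, (T ^ (k + 1)) x⟫ : ℂ)‖ = b (k + 1) ^ 2 := by
        rw [inner_self_eq_norm_sq_to_K, norm_pow]
        simp [hbdef]
      have e3 : ‖(⟪(T ^ k) x, (ContinuousLinearMap.adjoint T) ((T ^ (k + 1)) x)⟫ : ℂ)‖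
          ≤ b k * b (k + 2) := by
        calc ‖(⟪(T ^ k) x, (ContinuousLinearMap.adjoint T) ((T ^ (k + 1)) x)⟫ : ℂ)‖
            ≤ ‖(T ^ k) x‖ * ‖(ContinuousLinearMap.adjoint T) ((T ^ (k + 1)) x)‖ :=
              norm_inner_le_norm _ _
          _ = b k * b (k + 2) := by
              rw [hadj, ← happ (k + 1)]
      rw [← e2, e1]
      exact e3
    have hper : ∀ k, b (k + m) = b k := by
      intro k
      have : (T ^ (k + m)) x = (T ^ k) x := by
        rw [pow_add, ContinuousLinearMap.mul_apply, hx]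
      simp only [hbdef, this]
    have := logconvex_periodic_const b hbpos hconv m hm hper
    simpa [hbdef] using this
  -- the periodic points form a submodule
  set P : Submodule ℂ H :=
    { carrier := {x : H | ∃ m : ℕ, 0 < m ∧ (T ^ m) x = x}
      add_mem' := by
        rintro x y ⟨m, hm, hx⟩ ⟨n, hn, hy⟩
        refine ⟨m * n, Nat.mul_pos hm hn, ?_⟩
        rw [map_add]
        have h1 : (T ^ (m * n)) x = x := by rw [pow_mul]; exact pow_fixed _ _ hx n
        have h2 : (T ^ (m * n)) y = y := by
          rw [mul_comm, pow_mul]; exact pow_fixed _ _ hy m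
        rw [h1, h2]
      zero_mem' := ⟨1, one_pos, by simp⟩
      smul_mem' := by
        rintro c x ⟨m, hm, hx⟩
        exact ⟨m, hm, by rw [map_smul, hx]⟩ } with hPdef
  have hspan : Submodule.span ℂ {x : H | ∃ m : ℕ, 0 < m ∧ (T ^ m) x = x} = P :=
    Submodule.span_eq P
  rw [hspan]
  -- finite-dimensionality by compactness
  by_contra hfin
  obtain ⟨R, f, hR1, hfR, hsep⟩ := exists_seq_norm_le_one_le_norm_sub (E := ↥P) (𝕜 := ℂ) hfin
  have hKc : IsCompact (closure (T '' Metric.closedBall 0 R)) := by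
    have := IsCompactOperator.isCompact_closure_image_closedBall (𝕜₁ := ℂ)
      (f := (T : H →ₗ[ℂ] H)) hC R
    exact this
  set g : ℕ → H := fun n => T ((f n : H)) with hgdef
  have hgK : ∀ n, g n ∈ closure (T '' Metric.closedBall 0 R) := by
    intro n
    apply subset_closure
    exact ⟨(f n : H), by simpa [Metric.mem_closedBall, dist_zero_right] using hfR n, rfl⟩
  obtain ⟨a, _, φ, hφ, hconv⟩ := hKc.tendsto_subseq hgK
  have hcauchy : CauchySeq (g ∘ φ) := hconv.cauchySeq
  rw [Metric.cauchySeq_iff] at hcauchy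
  obtain ⟨N, hN'⟩ := hcauchy 1 one_pos
  have hne : φ (N + 1) ≠ φ N := fun h =>
    absurd (h ▸ hφ (Nat.lt_succ_self N)) (lt_irrefl _)
  have hdist := hN' (N + 1) (Nat.le_succ N) N le_rfl
  have hge : (1 : ℝ) ≤ dist ((g ∘ φ) (N + 1)) ((g ∘ φ) N) := by
    have h1 : (1 : ℝ) ≤ ‖f (φ (N + 1)) - f (φ N)‖ := hsep hne
    have h2 : ((f (φ (N + 1)) : H) - (f (φ N) : H)) ∈ P := by
      exact sub_mem (f (φ (N + 1))).2 (f (φ N)).2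
    have h3 : ‖T ((f (φ (N + 1)) : H) - (f (φ N) : H))‖
        = ‖(f (φ (N + 1)) : H) - (f (φ N) : H)‖ := hiso _ h2
    have h4 : dist ((g ∘ φ) (N + 1)) ((g ∘ φ) N)
        = ‖T ((f (φ (N + 1)) : H) - (f (φ N) : H))‖ := by
      simp only [Function.comp_apply, hgdef, dist_eq_norm, map_sub]
    rw [h4, h3]
    calc (1 : ℝ) ≤ ‖f (φ (N + 1)) - f (φ N)‖ := h1
      _ = ‖(f (φ (N + 1)) : H) - (f (φ N) : H)‖ := by
          rw [← Submodule.coe_sub]; rfl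
  linarith
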